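/- Let J ⊆ [0,1] be a ×d-invariant set with digit set E, 1 < #E < d, and let λ denote Lebesgue measure on ℝ². For λ-almost every pair (x,y) ∈ ℝ² with x ≠ y, the image of J under the unique affine map f sending x to 0 and y to 1 contains no rational number. -/

import Mathlib

open MeasureTheory

/-- The ×d-invariant set of reals in [0,1] whose base-d digits all lie in `E`. -/
def timesdSet (d : ℕ) (E : Finset ℕ) : Set ℝ :=
  {x : ℝ | ∃ a : ℕ → ℕ, (∀ i, a i ∈ E) ∧ x = ∑' i : ℕ, (a i : ℝ) / d ^ (i + 1)}

section aux

variable {d : ℕ}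

lemma aux_dR (hd : 2 ≤ d) : (1:ℝ) < d := by exact_mod_cast lt_of_lt_of_le one_lt_two hd

lemma aux_summable (hd : 2 ≤ d) {a : ℕ → ℕ} (ha : ∀ i, a i < d) :
    Summable (fun i => (a i : ℝ) / d ^ (i + 1)) := by
  have hd1 : (1:ℝ) < d := aux_dR hd
  have h0 : (0:ℝ) ≤ (d:ℝ)⁻¹ := by positivity
  have h1 : (d:ℝ)⁻¹ < 1 := inv_lt_one_of_one_lt₀ hd1
  refine Summable.of_nonneg_of_le (fun i => by positivity) (fun i => ?_)
    (summable_geometric_of_lt_one h0 h1)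
  rw [div_le_iff₀ (by positivity)]
  have hdne : (d:ℝ) ≠ 0 := by positivity
  have : ((d:ℝ)⁻¹) ^ i * (d:ℝ) ^ (i+1) = d := by
    rw [pow_succ, inv_pow]
    field_simp
  rw [this]
  exact_mod_cast (ha i).le

lemma aux_tail (hd : 2 ≤ d) {a : ℕ → ℕ} (ha : ∀ i, a i < d) (n : ℕ) :
    ∑' i : ℕ, (a (i + n) : ℝ) / d ^ (i + n + 1) ≤ ((d:ℝ)⁻¹) ^ n := by
  have hd1 : (1:ℝ) < d := aux_dR hd
  have hdne : (d:ℝ) ≠ 0 := by positivity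
  have h0 : (0:ℝ) ≤ (d:ℝ)⁻¹ := by positivity
  have h1 : (d:ℝ)⁻¹ < 1 := inv_lt_one_of_one_lt₀ hd1
  have hg : Summable (fun i : ℕ => ((d:ℝ) - 1) * ((d:ℝ)⁻¹) ^ (i + n + 1)) := by
    have : Summable (fun i : ℕ => ((d:ℝ)⁻¹) ^ i) := summable_geometric_of_lt_one h0 h1
    have := (this.mul_left (((d:ℝ) - 1) * ((d:ℝ)⁻¹) ^ (n + 1)))
    refine this.congr fun i => ?_
    rw [pow_add, pow_add]
    ring
  have hf : Summable (fun i : ℕ => (a (i + n) : ℝ) / d ^ (i + n + 1)) :=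
    ((aux_summable hd ha).comp_injective (add_left_injective n))
  have hle : ∀ i : ℕ, (a (i + n) : ℝ) / d ^ (i + n + 1)
      ≤ ((d:ℝ) - 1) * ((d:ℝ)⁻¹) ^ (i + n + 1) := by
    intro i
    have h1' : (a (i + n) : ℝ) ≤ (d:ℝ) - 1 := by
      have := ha (i + n)
      have : (a (i+n) : ℝ) + 1 ≤ (d:ℝ) := by exact_mod_cast this
      linarith
    rw [div_le_iff₀ (by positivity)]
    calc (a (i + n) : ℝ) ≤ (d:ℝ) - 1 := h1'
      _ = ((d:ℝ) - 1) * (((d:ℝ)⁻¹) ^ (i + n + 1) * (d:ℝ) ^ (i + n + 1)) := by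
          rw [inv_pow, inv_mul_cancel₀ (by positivity)]; ring
      _ = ((d:ℝ) - 1) * ((d:ℝ)⁻¹) ^ (i + n + 1) * (d:ℝ) ^ (i + n + 1) := by ring
  calc ∑' i : ℕ, (a (i + n) : ℝ) / d ^ (i + n + 1)
      ≤ ∑' i : ℕ, ((d:ℝ) - 1) * ((d:ℝ)⁻¹) ^ (i + n + 1) := Summable.tsum_le_tsum hle hf hg
    _ = (((d:ℝ) - 1) * ((d:ℝ)⁻¹) ^ (n + 1)) * ∑' i : ℕ, ((d:ℝ)⁻¹) ^ i := by
        rw [← tsum_mul_left]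
        refine tsum_congr fun i => ?_
        rw [pow_add, pow_add]; ring
    _ = ((d:ℝ)⁻¹) ^ n := by
        rw [tsum_geometric_of_lt_one h0 h1]
        have hd1' : (d:ℝ) - 1 ≠ 0 := by nlinarith [aux_dR hd]
        rw [pow_succ, inv_pow]
        field_simp

lemma vol_timesdSet_zero (hd : 2 ≤ d) (E : Finset ℕ) (hE : ∀ e ∈ E, e < d) (hcard' : E.card < d) :
    volume (timesdSet d E) = 0 := by
  have hd1 : (1:ℝ) < d := aux_dR hd
  have hd0 : (0:ℕ) < d := by omega
  set c : ENNReal := (E.card : ENNReal) / d with hc_def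
  have hc : c < 1 := by
    rw [hc_def, ENNReal.div_lt_iff (Or.inl (by exact_mod_cast hd0.ne'))
      (Or.inl (by simp))]
    · simpa using (by exact_mod_cast hcard' : (E.card : ENNReal) < d)
  have key : ∀ n : ℕ, volume (timesdSet d E) ≤ c ^ n := by
    intro n
    set P : Finset (Fin n → ℕ) := Fintype.piFinset (fun _ => E) with hP
    have cover : timesdSet d E ⊆
        ⋃ f ∈ P, Set.Icc (∑ i : Fin n, (f i : ℝ) / d ^ ((i : ℕ) + 1))
          ((∑ i : Fin n, (f i : ℝ) / d ^ ((i : ℕ) + 1)) + ((d:ℝ)⁻¹) ^ n) := by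
      rintro x ⟨a, haE, rfl⟩
      have ha : ∀ i, a i < d := fun i => hE _ (haE i)
      have hfP : (fun i : Fin n => a (i : ℕ)) ∈ P := Fintype.mem_piFinset.2 fun i => haE i
      refine Set.mem_biUnion hfP ?_
      · have hsplit := Summable.sum_add_tsum_nat_add (f := fun i => (a i : ℝ) / d ^ (i + 1)) n
          (aux_summable hd ha)
        have hfin : (∑ i : Fin n, (a (i : ℕ) : ℝ) / d ^ ((i : ℕ) + 1))
            = ∑ i ∈ Finset.range n, (a i : ℝ) / d ^ (i + 1) :=
          Fin.sum_univ_eq_sum_range (fun i => (a i : ℝ) / d ^ (i + 1)) n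
        have htail0 : 0 ≤ ∑' i : ℕ, (a (i + n) : ℝ) / d ^ (i + n + 1) :=
          tsum_nonneg fun i => by positivity
        have htail1 := aux_tail hd ha n
        constructor
        · rw [← hsplit, hfin]
          simpa using htail0
        · rw [← hsplit, hfin]
          exact add_le_add_right htail1 _
    calc volume (timesdSet d E)
        ≤ ∑ f ∈ P, volume (Set.Icc (∑ i : Fin n, (f i : ℝ) / d ^ ((i : ℕ) + 1))
          ((∑ i : Fin n, (f i : ℝ) / d ^ ((i : ℕ) + 1)) + ((d:ℝ)⁻¹) ^ n)) :=
          (measure_mono cover).trans (measure_biUnion_finset_le P _)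
      _ = P.card * ENNReal.ofReal (((d:ℝ)⁻¹) ^ n) := by
          simp only [Real.volume_Icc, add_sub_cancel_left]
          rw [Finset.sum_const, nsmul_eq_mul]
      _ = (E.card : ENNReal) ^ n * ((d : ENNReal)⁻¹) ^ n := by
          congr 1
          · rw [hP, Fintype.card_piFinset]
            simp
          · rw [ENNReal.ofReal_pow (by positivity), ENNReal.ofReal_inv_of_pos
              (by exact_mod_cast hd0), ENNReal.ofReal_natCast]
      _ = c ^ n := by
          rw [hc_def, ENNReal.div_eq_inv_mul, mul_pow]; ring
  have hlim := ENNReal.tendsto_pow_atTop_nhds_zero_of_lt_one hc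
  have := ge_of_tendsto' hlim key
  simpa using this

end aux

theorem random_similarity_no_rationals (d : ℕ) (hd : 2 ≤ d) (E : Finset ℕ)
    (hE : ∀ e ∈ E, e < d) (hcard : 1 < E.card) (hcard' : E.card < d) :
    ∀ᵐ z : ℝ × ℝ ∂(volume : Measure (ℝ × ℝ)), z.1 ≠ z.2 →
      ∀ r : ℚ, (r : ℝ) ∉ (fun t => (t - z.1) / (z.2 - z.1)) '' timesdSet d E := by
  obtain ⟨N, hJN, hNm, hN0⟩ :=
    exists_measurable_superset_of_null (vol_timesdSet_zero hd E hE hcard')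
  set S : ℚ → Set (ℝ × ℝ) := fun r =>
    {z : ℝ × ℝ | (1 - (r:ℝ)) * z.1 + (r:ℝ) * z.2 ∈ N} with hS_def
  have hSm : ∀ r : ℚ, MeasurableSet (S r) := fun r =>
    ((measurable_fst.const_mul (1 - (r:ℝ))).add (measurable_snd.const_mul (r:ℝ))) hNm
  have hS0 : ∀ r : ℚ, volume (S r) = 0 := by
    intro r
    rw [show (volume : Measure (ℝ × ℝ)) = Measure.prod volume volume from rfl,
      Measure.measure_prod_null (hSm r)]
    rcases eq_or_ne (r : ℝ) 0 with h0 | h0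
    · filter_upwards [measure_eq_zero_iff_ae_notMem.mp hN0] with x hx
      have : Prod.mk x ⁻¹' S r = (∅ : Set ℝ) := by
        ext y
        simp [hS_def, h0, hx]
      simp [this]
    · refine Filter.Eventually.of_forall fun x => ?_
      show volume (Prod.mk x ⁻¹' S r) = 0
      have heq : Prod.mk x ⁻¹' S r =
          ((r:ℝ) * ·) ⁻¹' ((fun t => (1 - (r:ℝ)) * x + t) ⁻¹' N) := by
        ext y; simp [hS_def]
      rw [heq, Real.volume_preimage_mul_left h0, measure_preimage_add, hN0, mul_zero]
  have hae : ∀ᵐ z : ℝ × ℝ ∂(volume : Measure (ℝ × ℝ)), ∀ r : ℚ, z ∉ S r := by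
    rw [ae_all_iff]
    intro r
    exact measure_eq_zero_iff_ae_notMem.mp (hS0 r)
  filter_upwards [hae] with z hz hne r hr
  obtain ⟨t, ht, hft⟩ := hr
  have hyx : z.2 - z.1 ≠ 0 := sub_ne_zero.mpr (Ne.symm hne)
  have : t - z.1 = (r:ℝ) * (z.2 - z.1) := by
    field_simp at hft
    linarith [hft]
  have hmem : (1 - (r:ℝ)) * z.1 + (r:ℝ) * z.2 ∈ N := by
    have : (1 - (r:ℝ)) * z.1 + (r:ℝ) * z.2 = t := by linarith [this]
    rw [this]
    exact hJN ht
  exact hz r hmem
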